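/- Let C be a linear [n,k]_q code with generator matrix G and parity-check matrix H, and let Hull(C) = C ∩ C^⊥. Then rank(G·G^t) = k − dim(Hull(C)) and rank(H·H^t) = n − k − dim(Hull(C)). -/

import Mathlib

open Matrix

variable {F : Type*} [Field F] [Fintype F]

/-- The Euclidean dual of a linear code `C ⊆ F^n`. -/
def dualCode {n : ℕ} (C : Submodule F (Fin n → F)) : Submodule F (Fin n → F) where
  carrier := {u | ∀ c ∈ C, dotProduct u c = 0}
  add_mem' := by
    intro a b ha hb c hc
    simp [add_dotProduct, ha c hc, hb c hc]
  zero_mem' := by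
    intro c hc
    simp
  smul_mem' := by
    intro r a ha c hc
    simp [smul_dotProduct, ha c hc]

/-- `G` is a generator matrix of the code `C`: its rows form a basis of `C`. -/
def IsGenMat {n k : ℕ} (C : Submodule F (Fin n → F)) (G : Matrix (Fin k) (Fin n) F) : Prop :=
  LinearIndependent F (fun i => G i) ∧ Submodule.span F (Set.range fun i => G i) = C

lemma dual_span_eq_ker {n m : ℕ} (M : Matrix (Fin m) (Fin n) F) :
    dualCode (Submodule.span F (Set.range fun i => M i)) = LinearMap.ker M.mulVecLin := by
  ext c
  constructor
  · intro hc
    simp only [LinearMap.mem_ker, Matrix.mulVecLin_apply]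
    funext i
    have := hc (M i) (Submodule.subset_span ⟨i, rfl⟩)
    simpa [Matrix.mulVec, dotProduct_comm] using this
  · intro hc x hx
    have hrow : ∀ i, dotProduct c (M i) = 0 := by
      intro i
      have := congrFun (LinearMap.mem_ker.mp hc) i
      simpa [Matrix.mulVec, dotProduct_comm] using this
    induction hx using Submodule.span_induction with
    | mem x hx => obtain ⟨i, rfl⟩ := hx; exact hrow i
    | zero => simp
    | add x y _ _ hx hy => simp [dotProduct_add, hx, hy]
    | smul a x _ hx => simp [dotProduct_smul, hx]

/-- Key lemma: for a matrix with linearly independent rows,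
`rank (M * Mᵀ) = m - dim (rowspace ⊓ dual rowspace)`. -/
lemma rank_mul_transpose_self {n m : ℕ} (M : Matrix (Fin m) (Fin n) F)
    (hind : LinearIndependent F (fun i => M i)) :
    (M * M.transpose).rank = m -
      Module.finrank F ↥(Submodule.span F (Set.range fun i => M i) ⊓
        dualCode (Submodule.span F (Set.range fun i => M i))) := by
  set S := Submodule.span F (Set.range fun i => M i)
  have hker : LinearMap.ker (M * M.transpose).mulVecLin
      = Submodule.comap M.transpose.mulVecLin (dualCode S) := by
    rw [Matrix.mulVecLin_mul, LinearMap.ker_comp, dual_span_eq_ker]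
  have hinj : Function.Injective M.transpose.mulVecLin := by
    rw [Matrix.mulVecLin_transpose, Matrix.coe_vecMulLinear]
    exact Matrix.vecMul_injective_iff.mpr hind
  have hrange : LinearMap.range M.transpose.mulVecLin = S := by
    rw [Matrix.mulVecLin_transpose]
    exact range_vecMulLinear M
  have hdim : Module.finrank F ↥(LinearMap.ker (M * M.transpose).mulVecLin)
      = Module.finrank F ↥(S ⊓ dualCode S) := by
    rw [hker]
    have := (Submodule.equivMapOfInjective _ hinj
      (Submodule.comap M.transpose.mulVecLin (dualCode S))).finrank_eq
    rw [this, Submodule.map_comap_eq, hrange, inf_comm]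
  have hrn := LinearMap.finrank_range_add_finrank_ker (M * M.transpose).mulVecLin
  have : (M * M.transpose).rank + Module.finrank F ↥(S ⊓ dualCode S) = m := by
    rw [Matrix.rank, ← hdim, hrn]
    simp [Module.finrank_fintype_fun_eq_card]
  omega

lemma finrank_span_rows {n m : ℕ} (M : Matrix (Fin m) (Fin n) F)
    (hind : LinearIndependent F (fun i => M i)) :
    Module.finrank F ↥(Submodule.span F (Set.range fun i => M i)) = m := by
  rw [finrank_span_eq_card hind, Fintype.card_fin]

lemma finrank_dual {n m : ℕ} (M : Matrix (Fin m) (Fin n) F)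
    (hind : LinearIndependent F (fun i => M i)) :
    Module.finrank F ↥(dualCode (Submodule.span F (Set.range fun i => M i))) = n - m := by
  rw [dual_span_eq_ker]
  have hrn := LinearMap.finrank_range_add_finrank_ker M.mulVecLin
  have hr : Module.finrank F ↥(LinearMap.range M.mulVecLin) = m := by
    have : (Matrix.rank M) = m := by
      rw [← Matrix.rank_transpose, Matrix.rank, Matrix.mulVecLin_transpose,
        range_vecMulLinear, finrank_span_eq_card (b := M.row) hind, Fintype.card_fin]
    simpa [Matrix.rank] using this
  rw [hr] at hrn
  simp only [Module.finrank_fintype_fun_eq_card, Fintype.card_fin] at hrn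
  omega

theorem rank_GGt_HHt_hull {n k mH : ℕ}
    (C : Submodule F (Fin n → F)) (hk : Module.finrank F C = k)
    (G : Matrix (Fin k) (Fin n) F) (hG : IsGenMat C G)
    (H : Matrix (Fin mH) (Fin n) F) (hH : IsGenMat (dualCode C) H) :
    (G * G.transpose).rank = k - Module.finrank F ↥(C ⊓ dualCode C) ∧
      (H * H.transpose).rank = n - k - Module.finrank F ↥(C ⊓ dualCode C) := by
  obtain ⟨hGi, hGs⟩ := hG
  obtain ⟨hHi, hHs⟩ := hH
  -- dim dualCode C = n - k
  have hdual : Module.finrank F ↥(dualCode C) = n - k := by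
    rw [← hGs, finrank_dual G hGi]
  have hmH : mH = n - k := by
    rw [← hHs] at hdual
    rw [finrank_span_rows H hHi] at hdual
    omega
  have hkn : k ≤ n := by
    have h := Submodule.finrank_le C
    rw [hk] at h
    simpa [Module.finrank_fintype_fun_eq_card] using h
  -- bidual
  have hbidual : dualCode (dualCode C) = C := by
    have hle : C ≤ dualCode (dualCode C) := by
      intro x hx u hu
      rw [dotProduct_comm]
      exact hu x hx
    refine (Submodule.eq_of_le_of_finrank_le hle ?_).symm
    have h1 : Module.finrank F ↥(dualCode (dualCode C)) = n - mH := by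
      rw [← hHs, finrank_dual H hHi]
    rw [h1, hk, hmH]
    omega
  constructor
  · have := rank_mul_transpose_self G hGi
    rwa [hGs] at this
  · have := rank_mul_transpose_self H hHi
    rw [hHs, hbidual, inf_comm] at this
    rw [this, hmH]
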